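/- If a graph G admits a transitive partition of size k with k even, then G admits a 2-transitive partition of size k/2; hence Tr₂(G) ≥ Tr(G)/2 when Tr(G) is even. -/
import Mathlib


open SimpleGraph

def TwoTransPart {V : Type*} (G : SimpleGraph V) (k : ℕ) (P : Fin k → Set V) : Prop :=
  (∀ i, (P i).Nonempty) ∧ (∀ v, ∃! i, v ∈ P i) ∧
    ∀ i j : Fin k, i < j → ∀ v ∈ P j,
      ∃ u w, u ∈ P i ∧ w ∈ P i ∧ u ≠ w ∧ G.Adj u v ∧ G.Adj w v

/-- The 2-transitivity `Tr₂(G)`: the maximum size of a 2-transitive partition of `G`. -/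
noncomputable def tr2 {V : Type*} (G : SimpleGraph V) : ℕ :=
  sSup {k | ∃ P : Fin k → Set V, TwoTransPart G k P}

def TransPart {V : Type*} (G : SimpleGraph V) (k : ℕ) (P : Fin k → Set V) : Prop :=
  (∀ i, (P i).Nonempty) ∧ (∀ v, ∃! i, v ∈ P i) ∧
    ∀ i j : Fin k, i < j → ∀ v ∈ P j, ∃ u ∈ P i, G.Adj u v

/-- The transitivity `Tr(G)`: the maximum size of a transitive partition of `G`. -/
noncomputable def tr {V : Type*} (G : SimpleGraph V) : ℕ :=
  sSup {k | ∃ P : Fin k → Set V, TransPart G k P}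

lemma card_bound {V : Type*} [Fintype V] {k : ℕ} (P : Fin k → Set V)
    (h1 : ∀ i, (P i).Nonempty) (h2 : ∀ v, ∃! i, v ∈ P i) : k ≤ Fintype.card V := by
  classical
  have hinj : Function.Injective (fun i => (h1 i).some) := by
    intro i j hij
    obtain ⟨i0, _, hu⟩ := h2 (h1 i).some
    have e1 : i = i0 := hu i (h1 i).some_mem
    have hij' : (h1 i).some = (h1 j).some := hij
    have e2 : j = i0 := hu j (by rw [hij']; exact (h1 j).some_mem)
    rw [e1, e2]
  simpa using Fintype.card_le_of_injective _ hinj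

lemma main_step {V : Type*} (G : SimpleGraph V) (k : ℕ) (hk : Even k)
    (h : ∃ P : Fin k → Set V, TransPart G k P) :
    ∃ Q : Fin (k / 2) → Set V, TwoTransPart G (k / 2) Q := by
  obtain ⟨P, hne, huniq, hdom⟩ := h
  obtain ⟨m, hm⟩ := hk
  have hk2 : k / 2 = m := by omega
  have ha : ∀ i : Fin (k / 2), 2 * i.1 < k := by intro i; have := i.2; omega
  have hb : ∀ i : Fin (k / 2), 2 * i.1 + 1 < k := by intro i; have := i.2; omega
  set a : Fin (k / 2) → Fin k := fun i => ⟨2 * i.1, ha i⟩ with ha'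
  set b : Fin (k / 2) → Fin k := fun i => ⟨2 * i.1 + 1, hb i⟩ with hb'
  refine ⟨fun i => P (a i) ∪ P (b i), ?_, ?_, ?_⟩
  · intro i; exact (hne (a i)).mono Set.subset_union_left
  · intro v
    obtain ⟨i, hi, hu⟩ := huniq v
    have hhalf : i.1 / 2 < k / 2 := by have := i.2; omega
    refine ⟨⟨i.1 / 2, hhalf⟩, ?_, ?_⟩
    · rcases Nat.even_or_odd i.1 with ⟨c, hc⟩ | ⟨c, hc⟩
      · left
        have : a ⟨i.1 / 2, hhalf⟩ = i := by
          apply Fin.ext; show 2 * (i.1 / 2) = i.1; omega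
        rw [this]; exact hi
      · right
        have : b ⟨i.1 / 2, hhalf⟩ = i := by
          apply Fin.ext; show 2 * (i.1 / 2) + 1 = i.1; omega
        rw [this]; exact hi
    · intro j hj
      rcases hj with hj | hj
      · have h := hu _ hj
        have h' : 2 * j.1 = i.1 := congrArg Fin.val h
        apply Fin.ext; show j.1 = i.1 / 2; omega
      · have h := hu _ hj
        have h' : 2 * j.1 + 1 = i.1 := congrArg Fin.val h
        apply Fin.ext; show j.1 = i.1 / 2; omega
  · intro i j hij v hv
    have hij' : i.1 < j.1 := hij
    have key : ∀ c : Fin k, v ∈ P c → 2 * j.1 ≤ c.1 →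
        ∃ u w, u ∈ (P (a i) ∪ P (b i)) ∧ w ∈ (P (a i) ∪ P (b i)) ∧ u ≠ w ∧
          G.Adj u v ∧ G.Adj w v := by
      intro c hc hcle
      have h1 : a i < c := by simp [Fin.lt_def, ha']; omega
      have h2 : b i < c := by simp [Fin.lt_def, hb']; omega
      obtain ⟨u, hu, hadju⟩ := hdom (a i) c h1 v hc
      obtain ⟨w, hw, hadjw⟩ := hdom (b i) c h2 v hc
      refine ⟨u, w, Or.inl hu, Or.inr hw, ?_, hadju, hadjw⟩
      intro huw
      obtain ⟨i0, _, hq⟩ := huniq u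
      have e1 : a i = i0 := hq _ hu
      have e2 : b i = i0 := hq _ (huw ▸ hw)
      have : (a i).1 = (b i).1 := by rw [e1, e2]
      simp [ha', hb'] at this
    rcases hv with hv | hv
    · exact key (a j) hv (by simp [ha'])
    · exact key (b j) hv (by simp [hb'])

theorem stmt4 {V : Type*} [Fintype V] (G : SimpleGraph V) :
    (∀ k : ℕ, Even k → (∃ P : Fin k → Set V, TransPart G k P) →
      ∃ Q : Fin (k / 2) → Set V, TwoTransPart G (k / 2) Q) ∧
    (Even (tr G) → tr G / 2 ≤ tr2 G) := by
  refine ⟨fun k hk h => main_step G k hk h, ?_⟩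
  intro heven
  by_cases h0 : tr G = 0
  · simp [h0]
  · have hbdd : BddAbove {k | ∃ P : Fin k → Set V, TransPart G k P} := by
      refine ⟨Fintype.card V, fun k hk => ?_⟩
      obtain ⟨P, h1, h2, _⟩ := hk
      exact card_bound P h1 h2
    have hne : {k | ∃ P : Fin k → Set V, TransPart G k P}.Nonempty := by
      rw [Set.nonempty_iff_ne_empty]
      intro hemp
      exact h0 (by simp [tr, hemp])
    have hmem : tr G ∈ {k | ∃ P : Fin k → Set V, TransPart G k P} :=
      Nat.sSup_mem hne hbdd
    obtain ⟨Q, hQ⟩ := main_step G (tr G) heven hmem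
    have hbdd2 : BddAbove {k | ∃ P : Fin k → Set V, TwoTransPart G k P} := by
      refine ⟨Fintype.card V, fun k hk => ?_⟩
      obtain ⟨P, h1, h2, _⟩ := hk
      exact card_bound P h1 h2
    exact le_csSup hbdd2 ⟨Q, hQ⟩
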